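/- (Rendl–Wolkowicz / consequence of the S-lemma) Let D = {x ∈ ℝⁿ : ‖x‖ ≤ 1} and J = diag(−I_n, 1) ∈ Sym(n+1). Then FC₊(D) = PSD(n+1) + cone{J}, i.e., a symmetric matrix A satisfies zᵀAz ≥ 0 for all z = (x,τ) with ‖x‖ ≤ τ if and only if A = P + ηJ for some P ⪰ 0 and η ≥ 0. -/

import Mathlib

open scoped Matrix
open Matrix

namespace RWAux

lemma dot_self_nonneg {n : ℕ} (v : Fin n → ℝ) : 0 ≤ v ⬝ᵥ v :=
  Finset.sum_nonneg fun i _ => mul_self_nonneg _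

lemma aux_limit (a b c δ : ℝ) (hδ : 0 < δ)
    (h : ∀ t ∈ Set.Ioo (0:ℝ) δ, 0 ≤ a*t^2 + b*t + c) : 0 ≤ c := by
  have hcont : Filter.Tendsto (fun t : ℝ => a*t^2 + b*t + c)
      (nhdsWithin 0 (Set.Ioi 0)) (nhds c) := by
    have h1 : ContinuousAt (fun t : ℝ => a*t^2 + b*t + c) 0 := by fun_prop
    have h2 : Filter.Tendsto (fun t : ℝ => a*t^2 + b*t + c)
        (nhdsWithin 0 (Set.Ioi 0)) (nhds (a*0^2 + b*0 + c)) :=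
      h1.tendsto.mono_left nhdsWithin_le_nhds
    simpa using h2
  refine ge_of_tendsto hcont ?_
  have hm : Set.Ioo (0:ℝ) δ ∈ nhdsWithin 0 (Set.Ioi 0) :=
    Ioo_mem_nhdsGT_of_mem ⟨le_refl _, hδ⟩
  exact Filter.eventually_of_mem hm h

lemma aux_lin (a b δ : ℝ) (hδ : 0 < δ)
    (h : ∀ t ∈ Set.Ioo (0:ℝ) δ, 0 ≤ a*t^2 + b*t) : 0 ≤ b := by
  have := aux_limit 0 a b δ hδ (fun t ht => by nlinarith [h t ht, ht.1])
  linarith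

variable {n : ℕ}

/-- embedding of ℝⁿ × ℝ into ℝⁿ⁺¹ -/
def emb (x : Fin n → ℝ) (τ : ℝ) : Fin (n+1) → ℝ := Fin.snoc x τ

lemma emb_decomp (x : Fin n → ℝ) (τ : ℝ) :
    emb x τ = emb x 0 + τ • emb (0 : Fin n → ℝ) 1 := by
  funext i
  refine Fin.lastCases ?_ (fun i => ?_) i <;> simp [emb]

lemma emb_add (x y : Fin n → ℝ) : emb (x + y) 0 = emb x 0 + emb y 0 := by
  funext i; refine Fin.lastCases ?_ (fun i => ?_) i <;> simp [emb]

lemma emb_smul (c : ℝ) (x : Fin n → ℝ) : emb (c • x) 0 = c • emb x 0 := by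
  funext i; refine Fin.lastCases ?_ (fun i => ?_) i <;> simp [emb]

lemma emb_self (z : Fin (n+1) → ℝ) :
    emb (fun i => z i.castSucc) (z (Fin.last n)) = z := by
  funext i; refine Fin.lastCases ?_ (fun i => ?_) i <;> simp [emb]

variable (A : Matrix (Fin (n+1)) (Fin (n+1)) ℝ)

def bform (x y : Fin n → ℝ) : ℝ := emb x 0 ⬝ᵥ A *ᵥ emb y 0
def lform (x : Fin n → ℝ) : ℝ := emb x 0 ⬝ᵥ A *ᵥ emb (0 : Fin n → ℝ) 1
def cform : ℝ := emb (0 : Fin n → ℝ) 1 ⬝ᵥ A *ᵥ emb (0 : Fin n → ℝ) 1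
def qform (x : Fin n → ℝ) : ℝ := bform A x x + 2 * lform A x + cform A

variable {A}

lemma S_symm (hA : A.IsSymm) (u v : Fin (n+1) → ℝ) :
    u ⬝ᵥ A *ᵥ v = v ⬝ᵥ A *ᵥ u := by
  rw [Matrix.dotProduct_mulVec, ← hA, Matrix.vecMul_transpose, dotProduct_comm, hA]

lemma bform_comm (hA : A.IsSymm) (x y : Fin n → ℝ) :
    bform A x y = bform A y x := S_symm hA _ _

lemma bform_add_right (x y z : Fin n → ℝ) :
    bform A x (y + z) = bform A x y + bform A x z := by
  simp [bform, emb_add, Matrix.mulVec_add, dotProduct_add]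

lemma bform_smul_right (c : ℝ) (x y : Fin n → ℝ) :
    bform A x (c • y) = c * bform A x y := by
  simp [bform, emb_smul, Matrix.mulVec_smul, dotProduct_smul]

lemma bform_add_left (x y z : Fin n → ℝ) :
    bform A (x + y) z = bform A x z + bform A y z := by
  simp [bform, emb_add, add_dotProduct]

lemma bform_smul_left (c : ℝ) (x y : Fin n → ℝ) :
    bform A (c • x) y = c * bform A x y := by
  simp [bform, emb_smul, smul_dotProduct]

lemma lform_add (x y : Fin n → ℝ) : lform A (x + y) = lform A x + lform A y := by
  simp [lform, emb_add, add_dotProduct]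

lemma lform_smul (c : ℝ) (x : Fin n → ℝ) : lform A (c • x) = c * lform A x := by
  simp [lform, emb_smul, smul_dotProduct]

lemma S_expand (hA : A.IsSymm) (x : Fin n → ℝ) (τ : ℝ) :
    emb x τ ⬝ᵥ A *ᵥ emb x τ = bform A x x + 2*τ*lform A x + τ^2 * cform A := by
  have hcross : emb (0 : Fin n → ℝ) 1 ⬝ᵥ A *ᵥ emb x 0 = lform A x := S_symm hA _ _
  rw [emb_decomp]
  simp only [Matrix.mulVec_add, Matrix.mulVec_smul, dotProduct_add,
    add_dotProduct, dotProduct_smul, smul_dotProduct, smul_eq_mul]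
  rw [hcross]
  simp only [bform, lform, cform]
  ring

lemma qform_eq (hA : A.IsSymm) (x : Fin n → ℝ) :
    qform A x = emb x 1 ⬝ᵥ A *ᵥ emb x 1 := by
  rw [S_expand hA]; simp only [qform]; ring

lemma qform_shift (hA : A.IsSymm) (x v : Fin n → ℝ) (t : ℝ) :
    qform A (x + t • v) =
      qform A x + (bform A v v) * t^2 + 2*(bform A x v + lform A v)*t := by
  simp only [qform, bform_add_left, bform_add_right, bform_smul_left, bform_smul_right,
    lform_add, lform_smul, bform_comm hA v x]
  ring

lemma dot_shift (x v : Fin n → ℝ) (t : ℝ) :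
    (x + t • v) ⬝ᵥ (x + t • v) = x ⬝ᵥ x + (v ⬝ᵥ v) * t^2 + 2*(x ⬝ᵥ v)*t := by
  simp only [add_dotProduct, dotProduct_add, smul_dotProduct,
    dotProduct_smul, smul_eq_mul, dotProduct_comm v x]
  ring

lemma bform_shift (hA : A.IsSymm) (x v : Fin n → ℝ) (t : ℝ) :
    bform A (x + t • v) (x + t • v) =
      bform A x x + bform A v v * t^2 + 2*(bform A x v)*t := by
  simp only [bform_add_left, bform_add_right, bform_smul_left, bform_smul_right,
    bform_comm hA v x]
  ring

lemma qform_cont (hA : A.IsSymm) : Continuous (qform A) := by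
  have hemb : ∀ j : Fin (n+1), Continuous fun x : Fin n → ℝ => emb x 1 j := by
    intro j
    refine Fin.lastCases ?_ (fun i => ?_) j
    · simpa [emb] using (continuous_const : Continuous fun _ : Fin n → ℝ => (1:ℝ))
    · simpa [emb] using continuous_apply i
  have h2 : Continuous fun x : Fin n → ℝ => ∑ j, emb x 1 j * ∑ k, A j k * emb x 1 k :=
    continuous_finset_sum _ fun j _ =>
      (hemb j).mul (continuous_finset_sum _ fun k _ => continuous_const.mul (hemb k))
  have hq : qform A = fun x => ∑ j, emb x 1 j * ∑ k, A j k * emb x 1 k := by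
    funext x; rw [qform_eq hA]; rfl
  rw [hq]; exact h2


lemma exists_min (hA : A.IsSymm) :
    ∃ xs : Fin n → ℝ, xs ⬝ᵥ xs ≤ 1 ∧ ∀ y : Fin n → ℝ, y ⬝ᵥ y ≤ 1 → qform A xs ≤ qform A y := by
  have hdc : Continuous fun x : Fin n → ℝ => x ⬝ᵥ x :=
    continuous_finset_sum _ fun i _ => (continuous_apply i).mul (continuous_apply i)
  set K : Set (Fin n → ℝ) := {x | x ⬝ᵥ x ≤ 1} with hK
  have hclosed : IsClosed K := isClosed_le hdc continuous_const
  have hsub : K ⊆ Metric.closedBall 0 1 := by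
    intro x hx
    rw [Metric.mem_closedBall, dist_zero_right]
    rw [pi_norm_le_iff_of_nonneg (by norm_num)]
    intro i
    rw [Real.norm_eq_abs, abs_le_one_iff_mul_self_le_one]
    calc x i * x i ≤ x ⬝ᵥ x :=
          Finset.single_le_sum (fun j _ => mul_self_nonneg (x j)) (Finset.mem_univ i)
      _ ≤ 1 := hx
  have hcomp : IsCompact K :=
    Metric.isCompact_of_isClosed_isBounded hclosed
      (Metric.isBounded_closedBall.subset hsub)
  have hne : K.Nonempty := ⟨0, by simp [hK, zero_dotProduct]⟩
  obtain ⟨xs, hxs, hmin⟩ := hcomp.exists_isMinOn hne (qform_cont hA).continuousOn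
  exact ⟨xs, hxs, fun y hy => hmin hy⟩

theorem exists_eta (hA : A.IsSymm)
    (hq : ∀ x : Fin n → ℝ, x ⬝ᵥ x ≤ 1 → 0 ≤ qform A x) :
    ∃ (η : ℝ) (xs : Fin n → ℝ), 0 ≤ η ∧ xs ⬝ᵥ xs ≤ 1 ∧
      (∀ v, bform A xs v + lform A v + η * (xs ⬝ᵥ v) = 0) ∧
      (∀ w, 0 ≤ bform A w w + η * (w ⬝ᵥ w)) ∧
      η * (xs ⬝ᵥ xs) = η := by
  obtain ⟨xs, hxsK, hmin⟩ := exists_min hA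
  -- difference of q along shifts, as long as the shifted point is feasible
  have hshift : ∀ (v : Fin n → ℝ) (t : ℝ), (xs + t • v) ⬝ᵥ (xs + t • v) ≤ 1 →
      0 ≤ (bform A v v) * t^2 + 2*(bform A xs v + lform A v)*t := by
    intro v t hfeas
    have h1 := hmin _ hfeas
    rw [qform_shift hA] at h1
    linarith
  rcases lt_or_eq_of_le hxsK with hd | hd1
  · -- interior case: η = 0
    have hboth : ∀ v : Fin n → ℝ,
        (bform A xs v + lform A v = 0) ∧ 0 ≤ bform A v v := by
      intro v
      set δ : ℝ := min 1 ((1 - xs ⬝ᵥ xs) / (2*|xs ⬝ᵥ v| + v ⬝ᵥ v + 1)) with hδdef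
      have hden : (0:ℝ) < 2*|xs ⬝ᵥ v| + v ⬝ᵥ v + 1 := by
        have := abs_nonneg (xs ⬝ᵥ v); have := dot_self_nonneg v; linarith
      have hδ : 0 < δ := lt_min one_pos (div_pos (by linarith) hden)
      have hfeas : ∀ t : ℝ, |t| ≤ δ → (xs + t • v) ⬝ᵥ (xs + t • v) ≤ 1 := by
        intro t ht
        rw [dot_shift]
        have ht1 : |t| ≤ 1 := le_trans ht (min_le_left _ _)
        have ht2 : |t| ≤ (1 - xs ⬝ᵥ xs) / (2*|xs ⬝ᵥ v| + v ⬝ᵥ v + 1) :=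
          le_trans ht (min_le_right _ _)
        have ht3 : |t| * (2*|xs ⬝ᵥ v| + v ⬝ᵥ v + 1) ≤ 1 - xs ⬝ᵥ xs := by
          rw [← le_div_iff₀ hden]; exact ht2
        have habs : t * (xs ⬝ᵥ v) ≤ |t| * |xs ⬝ᵥ v| := by
          calc t * (xs ⬝ᵥ v) ≤ |t * (xs ⬝ᵥ v)| := le_abs_self _
            _ = |t| * |xs ⬝ᵥ v| := abs_mul _ _
        have ht0 : 0 ≤ |t| := abs_nonneg t
        have hsq : t^2 ≤ |t| := by
          nlinarith [sq_abs t, mul_nonneg ht0 (sub_nonneg.mpr ht1)]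
        nlinarith [dot_self_nonneg v]
      have hL1 : 0 ≤ bform A xs v + lform A v := by
        have := aux_lin (bform A v v) (2*(bform A xs v + lform A v)) δ hδ ?_
        · linarith
        · intro t ht
          have h1 := hshift v t (hfeas t (by rw [abs_of_pos ht.1]; exact le_of_lt ht.2))
          linarith
      have hL2 : 0 ≤ -(bform A xs v + lform A v) := by
        have := aux_lin (bform A v v) (-(2*(bform A xs v + lform A v))) δ hδ ?_
        · linarith
        · intro t ht
          have hfe : (xs + (-t) • v) ⬝ᵥ (xs + (-t) • v) ≤ 1 := by
            apply hfeas; rw [abs_neg, abs_of_pos ht.1]; exact le_of_lt ht.2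
          have h1 := hshift v (-t) hfe
          nlinarith
      have hL : bform A xs v + lform A v = 0 := le_antisymm (by linarith) hL1
      refine ⟨hL, ?_⟩
      have h1 := hshift v (δ/2) (hfeas (δ/2) (by rw [abs_of_pos (by linarith)]; linarith))
      rw [hL] at h1
      have hδ2 : 0 < (δ/2)^2 := pow_pos (half_pos hδ) 2
      nlinarith [h1, hδ2]
    refine ⟨0, xs, le_refl 0, hxsK, ?_, ?_, by ring⟩
    · intro v; have := (hboth v).1; linarith
    · intro w; have := (hboth w).2; linarith
  · -- boundary case
    have hd1' : xs ⬝ᵥ xs = 1 := hd1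
    have hL : ∀ v : Fin n → ℝ, xs ⬝ᵥ v < 0 → 0 ≤ bform A xs v + lform A v := by
      intro v hv
      set δ : ℝ := (-2*(xs ⬝ᵥ v))/(v ⬝ᵥ v + 1) with hδdef
      have hden : (0:ℝ) < v ⬝ᵥ v + 1 := by have := dot_self_nonneg v; linarith
      have hδ : 0 < δ := div_pos (by linarith) hden
      have := aux_lin (bform A v v) (2*(bform A xs v + lform A v)) δ hδ ?_
      · linarith
      · intro t ht
        have hfe : (xs + t • v) ⬝ᵥ (xs + t • v) ≤ 1 := by
          rw [dot_shift, hd1']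
          have ht2 : t * (v ⬝ᵥ v + 1) < -2*(xs ⬝ᵥ v) := by
            rw [← lt_div_iff₀ hden]; exact ht.2
          nlinarith [ht.1, dot_self_nonneg v]
        have h1 := hshift v t hfe
        linarith
    -- stationarity on the tangent space
    have hL0 : ∀ v : Fin n → ℝ, xs ⬝ᵥ v = 0 → bform A xs v + lform A v = 0 := by
      have key : ∀ v : Fin n → ℝ, xs ⬝ᵥ v = 0 → 0 ≤ bform A xs v + lform A v := by
        intro v hv
        have hfe : ∀ ε : ℝ, 0 < ε → xs ⬝ᵥ (v + (-ε) • xs) < 0 := by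
          intro ε hε
          rw [dotProduct_add, dotProduct_smul, hv, hd1', smul_eq_mul]
          linarith
        refine aux_limit 0 (-(bform A xs xs + lform A xs)) (bform A xs v + lform A v) 1
          one_pos (fun ε hε => ?_)
        have h1 := hL _ (hfe ε hε.1)
        rw [bform_add_right, bform_smul_right, lform_add, lform_smul] at h1
        linarith
      intro v hv
      have h1 := key v hv
      have h2 := key (-v) (by rw [dotProduct_neg, hv, neg_zero])
      rw [show (-v : Fin n → ℝ) = (-1 : ℝ) • v by funext i; simp,
        bform_smul_right, lform_smul] at h2
      linarith
    set η : ℝ := -(bform A xs xs + lform A xs) with hηdef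
    have hη0 : 0 ≤ η := by
      have h1 := hL ((-1 : ℝ) • xs) (by
        rw [dotProduct_smul, hd1', smul_eq_mul]; linarith)
      rw [bform_smul_right, lform_smul] at h1
      linarith
    have hstat : ∀ v, bform A xs v + lform A v + η * (xs ⬝ᵥ v) = 0 := by
      intro v
      have h1 := hL0 (v + (-(xs ⬝ᵥ v)) • xs) (by
        rw [dotProduct_add, dotProduct_smul, hd1', smul_eq_mul]; ring)
      rw [bform_add_right, bform_smul_right, lform_add, lform_smul] at h1
      have : bform A xs v + lform A v - (xs ⬝ᵥ v) * (bform A xs xs + lform A xs) = 0 := by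
        linarith
      rw [hηdef]; linarith [this]
    have hMneg : ∀ w : Fin n → ℝ, xs ⬝ᵥ w < 0 → 0 ≤ bform A w w + η * (w ⬝ᵥ w) := by
      intro w hw
      have hwne : w ⬝ᵥ w ≠ 0 := by
        intro h0
        rw [dotProduct_self_eq_zero] at h0
        rw [h0] at hw; simp at hw
      have hww : 0 < w ⬝ᵥ w := lt_of_le_of_ne (dot_self_nonneg w) (Ne.symm hwne)
      set t : ℝ := (-2*(xs ⬝ᵥ w))/(w ⬝ᵥ w) with htdef
      have ht : 0 < t := div_pos (by linarith) hww
      have htw : t * (w ⬝ᵥ w) = -2*(xs ⬝ᵥ w) := by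
        rw [htdef]; field_simp
      have hfe : (xs + t • w) ⬝ᵥ (xs + t • w) ≤ 1 := by
        rw [dot_shift, hd1']
        nlinarith
      have h1 := hshift w t hfe
      have h2 := hstat w
      have h3 : 2*(bform A xs w + lform A w)*t = η * (t^2 * (w ⬝ᵥ w)) := by
        linear_combination (2*t)*h2 - (η*t)*htw
      rw [h3] at h1
      nlinarith [mul_pos ht ht]
    have hMle : ∀ w : Fin n → ℝ, xs ⬝ᵥ w ≤ 0 → 0 ≤ bform A w w + η * (w ⬝ᵥ w) := by
      intro w hw
      rcases lt_or_eq_of_le hw with hw' | hw'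
      · exact hMneg w hw'
      · refine aux_limit (bform A xs xs + η * (xs ⬝ᵥ xs))
          (-2*(bform A w xs + η * (w ⬝ᵥ xs))) (bform A w w + η * (w ⬝ᵥ w)) 1 one_pos
          (fun ε hε => ?_)
        have hfe : xs ⬝ᵥ (w + (-ε) • xs) < 0 := by
          rw [dotProduct_add, dotProduct_smul, ← hw', hd1', smul_eq_mul]
          linarith [hε.1]
        have h1 := hMneg _ hfe
        rw [bform_shift hA, dot_shift] at h1
        nlinarith [h1]
    have hM : ∀ w : Fin n → ℝ, 0 ≤ bform A w w + η * (w ⬝ᵥ w) := by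
      intro w
      rcases le_or_gt (xs ⬝ᵥ w) 0 with hw | hw
      · exact hMle w hw
      · have h1 := hMle ((-1 : ℝ) • w) (by
          rw [dotProduct_smul, smul_eq_mul]; linarith)
        rw [bform_smul_right, bform_smul_left, smul_dotProduct,
          dotProduct_smul] at h1
        simp only [smul_eq_mul] at h1
        nlinarith
    exact ⟨η, xs, hη0, hxsK, hstat, hM, by rw [hd1']; ring⟩

lemma Jq (J : Matrix (Fin (n+1)) (Fin (n+1)) ℝ)
    (hJ : J = Matrix.diagonal (Fin.snoc (fun _ : Fin n => (-1 : ℝ)) 1))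
    (z : Fin (n+1) → ℝ) :
    z ⬝ᵥ J *ᵥ z = (z (Fin.last n))^2 -
      (fun i : Fin n => z i.castSucc) ⬝ᵥ (fun i : Fin n => z i.castSucc) := by
  subst hJ
  simp only [dotProduct, Matrix.mulVec_diagonal]
  rw [Fin.sum_univ_castSucc]
  simp only [Fin.snoc_castSucc, Fin.snoc_last, neg_mul, one_mul, mul_neg]
  rw [Finset.sum_neg_distrib]
  ring

end RWAux

open RWAux in
theorem rendl_wolkowicz' {n : ℕ}
    (J : Matrix (Fin (n + 1)) (Fin (n + 1)) ℝ)
    (hJ : J = Matrix.diagonal (Fin.snoc (fun _ : Fin n => (-1 : ℝ)) 1))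
    (A : Matrix (Fin (n + 1)) (Fin (n + 1)) ℝ) (hA : A.IsSymm) :
    (∀ z : Fin (n + 1) → ℝ,
        Real.sqrt ((fun i : Fin n => z i.castSucc) ⬝ᵥ (fun i : Fin n => z i.castSucc)) ≤
          z (Fin.last n) →
        0 ≤ z ⬝ᵥ A.mulVec z) ↔
      ∃ (P : Matrix (Fin (n + 1)) (Fin (n + 1)) ℝ) (η : ℝ),
        P.PosSemidef ∧ 0 ≤ η ∧ A = P + η • J := by
  have hJt : Jᵀ = J := by rw [hJ]; exact Matrix.diagonal_transpose _
  constructor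
  · intro h
    have hq : ∀ x : Fin n → ℝ, x ⬝ᵥ x ≤ 1 → 0 ≤ qform A x := by
      intro x hx
      have hpre : Real.sqrt ((fun i : Fin n => emb x 1 i.castSucc) ⬝ᵥ
          (fun i : Fin n => emb x 1 i.castSucc)) ≤ emb x 1 (Fin.last n) := by
        have he : (fun i : Fin n => emb x (1:ℝ) i.castSucc) = x := by
          funext i; simp [emb]
        have he2 : emb x (1:ℝ) (Fin.last n) = 1 := by simp [emb]
        rw [he, he2]
        exact Real.sqrt_le_one.mpr hx
      have h1 := h (emb x 1) hpre
      rw [qform_eq hA]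
      exact h1
    obtain ⟨η, xs, hη0, hxsK, hstat, hM, hcomp⟩ := exists_eta hA hq
    refine ⟨A - η • J, η, posSemidef_iff_dotProduct_mulVec.mpr ⟨?_, ?_⟩, hη0, by abel⟩
    · show (A - η • J)ᴴ = A - η • J
      rw [Matrix.conjTranspose_eq_transpose_of_trivial, Matrix.transpose_sub,
        Matrix.transpose_smul, hA, hJt]
    · intro z
      rw [show star z = z by simp]
      set x : Fin n → ℝ := fun i => z i.castSucc with hx
      set τ : ℝ := z (Fin.last n) with hτ
      have hz : z = emb x τ := (emb_self z).symm
      have hJz := Jq J hJ z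
      rw [← hx, ← hτ] at hJz
      have hAz : z ⬝ᵥ A *ᵥ z = bform A x x + 2*τ*lform A x + τ^2 * cform A := by
        conv_lhs => rw [hz]
        exact S_expand hA x τ
      have hsplit : z ⬝ᵥ (A - η • J) *ᵥ z = z ⬝ᵥ A *ᵥ z - η * (z ⬝ᵥ J *ᵥ z) := by
        rw [Matrix.sub_mulVec, dotProduct_sub, Matrix.smul_mulVec,
          dotProduct_smul, smul_eq_mul]
      set w : Fin n → ℝ := x + (-τ) • xs with hw
      have hbw := bform_shift hA x xs (-τ)
      have hdw := dot_shift x xs (-τ)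
      have hMw := hM w
      have hqxs := hq xs hxsK
      have E1 := hstat x
      have E2 := hstat xs
      have hc1 : bform A xs x = bform A x xs := bform_comm hA xs x
      have hc2 : xs ⬝ᵥ x = x ⬝ᵥ xs := dotProduct_comm xs x
      rw [hc1, hc2] at E1
      have key : (bform A x x + 2*τ*lform A x + τ^2 * cform A) - η * (τ^2 - x ⬝ᵥ x)
          = (bform A w w + η * (w ⬝ᵥ w)) + τ^2 * qform A xs := by
        rw [hw, hbw, hdw]
        simp only [qform]
        linear_combination (2*τ)*E1 - 2*τ^2*E2 + τ^2*hcomp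
      have hpos : 0 ≤ (bform A w w + η * (w ⬝ᵥ w)) + τ^2 * qform A xs :=
        add_nonneg hMw (mul_nonneg (sq_nonneg τ) hqxs)
      rw [hsplit, hAz, hJz]
      linarith [key, hpos]
  · rintro ⟨P, η, hP, hη, rfl⟩ z hz
    set x : Fin n → ℝ := fun i => z i.castSucc with hx
    have hτ0 : 0 ≤ z (Fin.last n) := le_trans (Real.sqrt_nonneg _) hz
    have hx2 : x ⬝ᵥ x ≤ (z (Fin.last n))^2 := by
      have h1 := Real.sq_sqrt (dot_self_nonneg x)
      nlinarith [Real.sqrt_nonneg (x ⬝ᵥ x), hz]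
    have hJz := Jq J hJ z
    rw [← hx] at hJz
    have hPz := (posSemidef_iff_dotProduct_mulVec.mp hP).2 z
    rw [show star z = z by simp] at hPz
    rw [Matrix.add_mulVec, dotProduct_add, Matrix.smul_mulVec,
      dotProduct_smul, smul_eq_mul, hJz]
    have h2 : 0 ≤ η * ((z (Fin.last n))^2 - x ⬝ᵥ x) :=
      mul_nonneg hη (by linarith)
    linarith [hPz, h2]

/-- Rendl–Wolkowicz; consequence of the S-lemma.
A symmetric matrix `A ∈ Sym(n+1)` satisfies `zᵀAz ≥ 0` for all `z = (x,τ)` with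
`‖x‖ ≤ τ` if and only if `A = P + ηJ` for some `P ⪰ 0` and `η ≥ 0`, where
`J = diag(−Iₙ, 1)`. -/
theorem rendl_wolkowicz {n : ℕ}
    (J : Matrix (Fin (n + 1)) (Fin (n + 1)) ℝ)
    (hJ : J = Matrix.diagonal (Fin.snoc (fun _ : Fin n => (-1 : ℝ)) 1))
    (A : Matrix (Fin (n + 1)) (Fin (n + 1)) ℝ) (hA : A.IsSymm) :
    (∀ z : Fin (n + 1) → ℝ,
        Real.sqrt ((fun i : Fin n => z i.castSucc) ⬝ᵥ (fun i : Fin n => z i.castSucc)) ≤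
          z (Fin.last n) →
        0 ≤ z ⬝ᵥ A.mulVec z) ↔
      ∃ (P : Matrix (Fin (n + 1)) (Fin (n + 1)) ℝ) (η : ℝ),
        P.PosSemidef ∧ 0 ≤ η ∧ A = P + η • J := by
  exact rendl_wolkowicz' J hJ A hA
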